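/- Let μ be a Borel measure on (0,∞), let μ̄ = δ₀ + μ be its augmentation by a unit point mass at 0, and let η' < η be real numbers. Then for every measurable function y : [0,∞) → ℝ and every t > 0, ∫_{[0,∞)} e^{-2tx} y(x)² (1+x)^η dμ̄(x) ≤ κ(η−η')² · (1 + t^{-(η−η')}) · ∫_{[0,∞)} y(x)² (1+x)^{η'} dμ̄(x), where κ(δ) = max{1, 2^{-δ/2} δ^{δ/2}}. In particular the multiplication semigroup S(t)y(x) = e^{-tx}y(x) maps the weighted L² space with weight (1+x)^{η'} dμ̄ into the one with weight (1+x)^{η} dμ̄, with operator norm at most κ(η−η')·(1 + t^{-(η−η')})^{1/2}. -/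

import Mathlib

open Real MeasureTheory

/-- `κ(δ) = max{1, 2^{-δ/2} δ^{δ/2}}`. -/
noncomputable def kappa (δ : ℝ) : ℝ := max 1 ((2 : ℝ) ^ (-(δ / 2)) * δ ^ (δ / 2))

lemma one_le_kappa (δ : ℝ) : 1 ≤ kappa δ := le_max_left _ _

lemma kappa_sq_ge (δ : ℝ) (hδ : 0 < δ) : (δ / 2) ^ δ ≤ kappa δ ^ 2 := by
  have hc : (0:ℝ) ≤ (2:ℝ) ^ (-(δ / 2)) * δ ^ (δ / 2) := by positivity
  have h2 : (2:ℝ) ^ (-(δ / 2)) * δ ^ (δ / 2) ≤ kappa δ := le_max_right _ _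
  have hsq : ((2:ℝ) ^ (-(δ / 2)) * δ ^ (δ / 2)) ^ 2 ≤ kappa δ ^ 2 := by
    nlinarith [hc, h2]
  refine le_trans (le_of_eq ?_) hsq
  have e1 : ((2:ℝ) ^ (-(δ / 2)) * δ ^ (δ / 2)) ^ 2
      = ((2:ℝ) ^ (-(δ / 2)) * (2:ℝ) ^ (-(δ / 2))) * (δ ^ (δ / 2) * δ ^ (δ / 2)) := by ring
  rw [e1, ← Real.rpow_add two_pos, ← Real.rpow_add hδ]
  have : -(δ / 2) + -(δ / 2) = -δ := by ring
  rw [this]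
  have : δ / 2 + δ / 2 = δ := by ring
  rw [this]
  rw [Real.div_rpow hδ.le (by norm_num : (0:ℝ) ≤ 2), Real.rpow_neg (by norm_num : (0:ℝ) ≤ 2)]
  ring

lemma key_pointwise (δ t x : ℝ) (hδ : 0 < δ) (ht : 0 < t) (hx : 0 ≤ x) :
    Real.exp (-(2 * t * x)) * (1 + x) ^ δ ≤ kappa δ ^ 2 * (1 + t ^ (-δ)) := by
  have hκ1 : (1:ℝ) ≤ kappa δ ^ 2 := by nlinarith [one_le_kappa δ]
  have htneg : (0:ℝ) ≤ t ^ (-δ) := Real.rpow_nonneg ht.le _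
  have hu : (0:ℝ) < 1 + x := by linarith
  rcases le_or_gt δ (2 * t) with hcase | hcase
  · -- δ ≤ 2t : bound by 1
    have h1 : (1 + x) ^ δ ≤ Real.exp (x * δ) := by
      have hle : 1 + x ≤ Real.exp x := by
        have := Real.add_one_le_exp x; linarith
      calc (1 + x) ^ δ ≤ (Real.exp x) ^ δ := Real.rpow_le_rpow hu.le hle hδ.le
        _ = Real.exp (x * δ) := (Real.exp_mul x δ).symm
    have h2 : Real.exp (-(2 * t * x)) * (1 + x) ^ δ
        ≤ Real.exp (-(2 * t * x)) * Real.exp (x * δ) := by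
      have := Real.exp_pos (-(2 * t * x))
      nlinarith [h1, this.le]
    rw [← Real.exp_add] at h2
    have h3 : -(2 * t * x) + x * δ ≤ 0 := by nlinarith
    have h4 : Real.exp (-(2 * t * x) + x * δ) ≤ 1 := by
      calc Real.exp (-(2 * t * x) + x * δ) ≤ Real.exp 0 := Real.exp_le_exp.mpr h3
        _ = 1 := Real.exp_zero
    nlinarith [h2, h4]
  · -- 2t < δ
    set u := 1 + x with hu'
    set a := 2 * t * u with ha'
    have hapos : 0 < a := by positivity
    have hstep : a / δ ≤ Real.exp (a / δ - 1) := by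
      have := Real.add_one_le_exp (a / δ - 1); linarith
    have hPow : a ^ δ ≤ δ ^ δ * Real.exp (a - δ) := by
      have h0 : a = δ * (a / δ) := by field_simp
      have h1 : a ^ δ = δ ^ δ * (a / δ) ^ δ := by
        rw [h0]; rw [Real.mul_rpow hδ.le (by positivity)]
        congr 1
        rw [h0]; field_simp
      have h2 : (a / δ) ^ δ ≤ (Real.exp (a / δ - 1)) ^ δ :=
        Real.rpow_le_rpow (by positivity) hstep hδ.le
      have h3 : (Real.exp (a / δ - 1)) ^ δ = Real.exp (a - δ) := by
        rw [← Real.exp_mul]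
        congr 1
        field_simp
      rw [h1]
      calc δ ^ δ * (a / δ) ^ δ ≤ δ ^ δ * (Real.exp (a / δ - 1)) ^ δ := by
            have : (0:ℝ) ≤ δ ^ δ := Real.rpow_nonneg hδ.le _
            nlinarith [h2, this]
        _ = δ ^ δ * Real.exp (a - δ) := by rw [h3]
    -- u^δ = a^δ / (2t)^δ
    have h2t : (0:ℝ) < 2 * t := by linarith
    have hu_pow : u ^ δ = a ^ δ / (2 * t) ^ δ := by
      rw [ha', Real.mul_rpow h2t.le hu.le]
      field_simp [ne_of_gt (Real.rpow_pos_of_pos h2t δ)]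
    have hexp : Real.exp (-(2 * t * x)) = Real.exp (2 * t - a) := by
      congr 1; rw [ha', hu']; ring
    have hmain : Real.exp (-(2 * t * x)) * u ^ δ
        ≤ δ ^ δ / (2 * t) ^ δ * Real.exp (2 * t - δ) := by
      rw [hexp, hu_pow]
      have hpos2t : (0:ℝ) < (2 * t) ^ δ := Real.rpow_pos_of_pos h2t δ
      rw [mul_div_assoc', div_mul_eq_mul_div]
      refine div_le_div_of_nonneg_right ?_ hpos2t.le
      have hE := Real.exp_pos (2 * t - a)
      have hcalc : Real.exp (2 * t - a) * (δ ^ δ * Real.exp (a - δ))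
          = δ ^ δ * Real.exp (2 * t - δ) := by
        rw [mul_comm (Real.exp (2*t-a)) _, mul_assoc, ← Real.exp_add]
        congr 2
        ring
      calc Real.exp (2 * t - a) * a ^ δ
          ≤ Real.exp (2 * t - a) * (δ ^ δ * Real.exp (a - δ)) := by
            nlinarith [hPow, hE.le]
        _ = δ ^ δ * Real.exp (2 * t - δ) := hcalc
    have hexp1 : Real.exp (2 * t - δ) ≤ 1 := by
      calc Real.exp (2 * t - δ) ≤ Real.exp 0 := Real.exp_le_exp.mpr (by linarith)
        _ = 1 := Real.exp_zero
    have hsplit : δ ^ δ / (2 * t) ^ δ = (δ / 2) ^ δ * t ^ (-δ) := by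
      rw [Real.div_rpow hδ.le (by norm_num : (0:ℝ) ≤ 2),
        Real.mul_rpow (by norm_num : (0:ℝ) ≤ 2) ht.le,
        Real.rpow_neg ht.le]
      field_simp
    have hκ : (δ / 2) ^ δ ≤ kappa δ ^ 2 := kappa_sq_ge δ hδ
    have hfinal : δ ^ δ / (2 * t) ^ δ ≤ kappa δ ^ 2 * t ^ (-δ) := by
      rw [hsplit]
      nlinarith [hκ, htneg]
    have hd : (0:ℝ) ≤ δ ^ δ / (2 * t) ^ δ := by positivity
    nlinarith [hmain, hexp1, hfinal, hd, Real.exp_pos (2*t-δ), htneg, hκ1]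

theorem semigroup_smoothing (μ : Measure ℝ) (hμ : μ (Set.Iic 0) = 0)
    (η' η : ℝ) (hηη : η' < η) (y : ℝ → ℝ) (hy : Measurable y) (t : ℝ) (ht : 0 < t) :
    ∫⁻ x, ENNReal.ofReal (Real.exp (-(2 * t * x)) * y x ^ 2 * (1 + x) ^ η)
        ∂(Measure.dirac 0 + μ)
      ≤ ENNReal.ofReal (kappa (η - η') ^ 2 * (1 + t ^ (-(η - η')))) *
        ∫⁻ x, ENNReal.ofReal (y x ^ 2 * (1 + x) ^ η') ∂(Measure.dirac 0 + μ) := by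
  set δ := η - η' with hδdef
  have hδ : 0 < δ := by simp [hδdef]; linarith
  set C := kappa δ ^ 2 * (1 + t ^ (-δ)) with hC
  have hC0 : 0 ≤ C := by
    have : (0:ℝ) ≤ t ^ (-δ) := Real.rpow_nonneg ht.le _
    nlinarith [one_le_kappa δ, this]
  -- a.e. nonneg
  have hae : ∀ᵐ x ∂(Measure.dirac 0 + μ), 0 ≤ x := by
    rw [ae_iff]
    have : {x : ℝ | ¬ 0 ≤ x} = Set.Iio 0 := by ext x; simp [Set.mem_Iio]
    rw [this, Measure.add_apply]
    have h1 : Measure.dirac (0:ℝ) (Set.Iio 0) = 0 := by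
      rw [Measure.dirac_apply' _ measurableSet_Iio]
      simp
    have h2 : μ (Set.Iio 0) = 0 :=
      le_antisymm (hμ ▸ measure_mono Set.Iio_subset_Iic_self) zero_le
    rw [h1, h2]; simp
  calc ∫⁻ x, ENNReal.ofReal (Real.exp (-(2 * t * x)) * y x ^ 2 * (1 + x) ^ η)
        ∂(Measure.dirac 0 + μ)
      ≤ ∫⁻ x, ENNReal.ofReal C * ENNReal.ofReal (y x ^ 2 * (1 + x) ^ η')
        ∂(Measure.dirac 0 + μ) := by
        refine lintegral_mono_ae (hae.mono fun x hx => ?_)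
        have hu : (0:ℝ) < 1 + x := by linarith
        have hsplit : (1 + x) ^ η = (1 + x) ^ δ * (1 + x) ^ η' := by
          rw [← Real.rpow_add hu]
          congr 1
          rw [hδdef]; ring
        have hkey := key_pointwise δ t x hδ ht hx
        have h1 : Real.exp (-(2 * t * x)) * y x ^ 2 * (1 + x) ^ η
            = (Real.exp (-(2 * t * x)) * (1 + x) ^ δ) * (y x ^ 2 * (1 + x) ^ η') := by
          rw [hsplit]; ring
        have h2 : (Real.exp (-(2 * t * x)) * (1 + x) ^ δ) * (y x ^ 2 * (1 + x) ^ η')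
            ≤ C * (y x ^ 2 * (1 + x) ^ η') := by
          have hnn : (0:ℝ) ≤ y x ^ 2 * (1 + x) ^ η' := by positivity
          exact mul_le_mul_of_nonneg_right hkey hnn
        rw [h1, ← ENNReal.ofReal_mul hC0]
        exact ENNReal.ofReal_le_ofReal h2
    _ = ENNReal.ofReal C * ∫⁻ x, ENNReal.ofReal (y x ^ 2 * (1 + x) ^ η')
        ∂(Measure.dirac 0 + μ) :=
        lintegral_const_mul' _ _ ENNReal.ofReal_ne_top
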